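/- Let n ≥ 1. In ℤ[X₀, …, X_{n−1}], let I be the ideal generated by Xᵢ² − (2·Xᵢ + X_{i+1}) for 0 ≤ i ≤ n−2 together with X_{n−1}². Then the quotient ring ℤ[X₀, …, X_{n−1}]/I is a free ℤ-module of rank 2ⁿ, with basis given by the images of the 2ⁿ square-free monomials ∏_{i ∈ S} Xᵢ for S ⊆ {0, …, n−1}. -/

import Mathlib

open MvPolynomial

set_option maxHeartbeats 1000000
set_option synthInstance.maxHeartbeats 1000000

/-- The generators of the ideal `I`: `Xᵢ² − (2Xᵢ + X_{i+1})` for `i ≤ n-2`, and `X_{n-1}²`. -/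
noncomputable def gens (n : ℕ) : Fin n → MvPolynomial (Fin n) ℤ := fun i =>
  if h : (i : ℕ) + 1 < n then X i ^ 2 - (2 * X i + X ⟨(i : ℕ) + 1, h⟩) else X i ^ 2

/-- The square-free monomial `∏_{i ∈ S} Xᵢ`, as an element of the quotient ring. -/
noncomputable def sqFreeMonomial (n : ℕ) (S : Finset (Fin n)) :
    MvPolynomial (Fin n) ℤ ⧸ Ideal.span (Set.range (gens n)) :=
  Ideal.Quotient.mk _ (∏ i ∈ S, X i)

/-! ### Auxiliary: the chain of univariate polynomials -/

/-- `chainPoly i` is the image of `Xᵢ` under the map to `ℤ[Y]`; it satisfies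
`chainPoly i ^ 2 - 2 * chainPoly i = chainPoly (i+1)`. -/
noncomputable def chainPoly : ℕ → Polynomial ℤ
  | 0 => Polynomial.X
  | (i+1) => (chainPoly i - 1)^2 - 1

noncomputable def gPoly (n : ℕ) : Polynomial ℤ := (chainPoly (n-1))^2

lemma chainPoly_monic_deg (i : ℕ) :
    (chainPoly i).Monic ∧ (chainPoly i).natDegree = 2^i := by
  induction i with
  | zero => exact ⟨Polynomial.monic_X, Polynomial.natDegree_X⟩
  | succ i ih =>
    obtain ⟨hm, hd⟩ := ih
    have hdpos : 0 < (chainPoly i).degree :=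
      Polynomial.natDegree_pos_iff_degree_pos.mp (by rw [hd]; positivity)
    have h1 : (chainPoly i - 1).Monic := by
      have := hm.sub_of_left (q := 1) (by simpa using hdpos)
      simpa using this
    have h2 : ((chainPoly i - 1)^2).Monic := h1.pow 2
    have hd1 : (chainPoly i - 1).natDegree = 2^i := by
      have : (chainPoly i - Polynomial.C 1).natDegree = (chainPoly i).natDegree :=
        Polynomial.natDegree_sub_C
      simpa [hd] using this
    have hd2 : ((chainPoly i - 1)^2).natDegree = 2^(i+1) := by
      rw [h1.natDegree_pow, hd1]; ring
    have hd2pos : 0 < ((chainPoly i - 1)^2).degree :=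
      Polynomial.natDegree_pos_iff_degree_pos.mp (by rw [hd2]; positivity)
    constructor
    · show ((chainPoly i - 1)^2 - 1).Monic
      have := h2.sub_of_left (q := 1) (by simpa using hd2pos)
      simpa using this
    · show ((chainPoly i - 1)^2 - 1).natDegree = 2^(i+1)
      have : ((chainPoly i - 1)^2 - Polynomial.C 1).natDegree = ((chainPoly i - 1)^2).natDegree :=
        Polynomial.natDegree_sub_C
      simpa [hd2] using this

lemma aeval_gens (n : ℕ) (i : Fin n) :
    MvPolynomial.aeval (fun j : Fin n => chainPoly (j : ℕ)) (gens n i) ∈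
      Ideal.span {gPoly n} := by
  unfold gens
  split
  · next h =>
    simp only [map_sub, map_add, map_mul, map_pow, MvPolynomial.aeval_X, map_ofNat, Fin.val_mk]
    rw [show chainPoly ((i:ℕ)+1) = (chainPoly (i:ℕ) - 1)^2 - 1 from rfl,
      show chainPoly (i:ℕ)^2 - (2*chainPoly (i:ℕ) + ((chainPoly (i:ℕ) - 1)^2 - 1)) = 0 by ring]
    exact zero_mem _
  · next h =>
    have hi : (i : ℕ) = n - 1 := by omega
    simp only [map_pow, MvPolynomial.aeval_X, hi]
    exact Ideal.subset_span rfl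

/-! ### Linear independence of monic polynomials of distinct degrees -/

lemma linearIndependent_monic_of_injective_natDegree {ι : Type*} [DecidableEq ι]
    (v : ι → Polynomial ℤ)
    (hm : ∀ i, (v i).Monic) (hinj : Function.Injective fun i => (v i).natDegree) :
    LinearIndependent ℤ v := by
  rw [linearIndependent_iff']
  intro s
  induction s using Finset.strongInduction with
  | _ s ih =>
    intro g hsum i hi
    have hs : s.Nonempty := ⟨i, hi⟩
    obtain ⟨i₀, hi₀, hmax⟩ := s.exists_max_image (fun j => (v j).natDegree) hs
    set D := (v i₀).natDegree with hD
    have hg0 : g i₀ = 0 := by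
      have hc := congrArg (fun p => Polynomial.coeff p D) hsum
      simp only [Polynomial.finset_sum_coeff, Polynomial.coeff_smul, Polynomial.coeff_zero,
        smul_eq_mul] at hc
      rw [Finset.sum_eq_single i₀] at hc
      · rwa [(hm i₀).coeff_natDegree, mul_one] at hc
      · intro j hj hne
        have hlt : (v j).natDegree < D :=
          lt_of_le_of_ne (hmax j hj) (fun h => hne (hinj h))
        rw [Polynomial.coeff_eq_zero_of_natDegree_lt hlt, mul_zero]
      · exact fun h => absurd hi₀ h
    have hsum' : ∑ j ∈ s.erase i₀, g j • v j = 0 := by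
      rw [← Finset.add_sum_erase s _ hi₀, hg0, zero_smul, zero_add] at hsum
      exact hsum
    rcases eq_or_ne i i₀ with rfl | hne
    · exact hg0
    · exact ih (s.erase i₀) (Finset.erase_ssubset hi₀) g hsum' i (Finset.mem_erase.mpr ⟨hne, hi⟩)

lemma sum_range_two_pow (n : ℕ) : ∑ i ∈ Finset.range n, 2^i = 2^n - 1 := by
  induction n with
  | zero => simp
  | succ n ih =>
    rw [Finset.sum_range_succ, ih]
    have : 1 ≤ 2^n := Nat.one_le_two_pow
    omega

/-! ### The comparison map to `ℤ[Y]/(gPoly n)` -/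

noncomputable def Phi (n : ℕ) :
    (MvPolynomial (Fin n) ℤ ⧸ Ideal.span (Set.range (gens n))) →ₐ[ℤ]
      (Polynomial ℤ ⧸ Ideal.span {gPoly n}) :=
  Ideal.Quotient.liftₐ _
    ((Ideal.Quotient.mkₐ ℤ _).comp (MvPolynomial.aeval fun j : Fin n => chainPoly (j:ℕ)))
    (by
      intro a ha
      have hle : Ideal.span (Set.range (gens n)) ≤
          RingHom.ker (((Ideal.Quotient.mkₐ ℤ (Ideal.span {gPoly n})).comp
            (MvPolynomial.aeval fun j : Fin n => chainPoly (j:ℕ))).toRingHom) := by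
        rw [Ideal.span_le]
        rintro _ ⟨i, rfl⟩
        show Ideal.Quotient.mkₐ ℤ _ (MvPolynomial.aeval _ (gens n i)) = 0
        rw [Ideal.Quotient.mkₐ_eq_mk, Ideal.Quotient.eq_zero_iff_mem]
        exact aeval_gens n i
      exact hle ha)

lemma Phi_mk (n : ℕ) (p : MvPolynomial (Fin n) ℤ) :
    Phi n (Ideal.Quotient.mk _ p) =
      Ideal.Quotient.mk _ (MvPolynomial.aeval (fun j : Fin n => chainPoly (j:ℕ)) p) := by
  rfl

/-! ### Linear independence of the square-free monomials -/

lemma sqFreeMonomial_li (n : ℕ) (hn : 1 ≤ n) :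
    LinearIndependent ℤ (sqFreeMonomial n) := by
  classical
  set q : Finset (Fin n) → Polynomial ℤ := fun S => ∏ i ∈ S, chainPoly (i:ℕ) with hq
  have hqm : ∀ S, (q S).Monic := fun S =>
    Polynomial.monic_prod_of_monic _ _ fun i _ => (chainPoly_monic_deg i).1
  have hqd : ∀ S, (q S).natDegree = ∑ i ∈ S, 2^(i:ℕ) := by
    intro S
    show (∏ i ∈ S, chainPoly (i:ℕ)).natDegree = _
    rw [Polynomial.natDegree_prod]
    · exact Finset.sum_congr rfl fun i _ => (chainPoly_monic_deg (i:ℕ)).2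
    · exact fun i _ => ((chainPoly_monic_deg (i:ℕ)).1).ne_zero
  have hdinj : Function.Injective fun S : Finset (Fin n) => ∑ i ∈ S, 2^(i:ℕ) := by
    intro S T h
    dsimp only at h
    have hmap : ∀ U : Finset (Fin n), ∑ i ∈ U, 2^(i:ℕ) = ∑ j ∈ U.map Fin.valEmbedding, 2^j :=
      fun U => (Finset.sum_map U Fin.valEmbedding (2 ^ ·)).symm
    rw [hmap S, hmap T] at h
    exact Finset.map_injective _ (Finset.geomSum_injective le_rfl h)
  have hqli : LinearIndependent ℤ q :=
    linearIndependent_monic_of_injective_natDegree q hqm (by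
      simpa only [hqd] using hdinj)
  have hdeg : ∀ S, (q S).degree < (2^n : ℕ) := by
    intro S
    have h1 : (q S).natDegree < 2^n := by
      rw [hqd]
      have h2 : ∑ i ∈ S, 2^(i:ℕ) ≤ ∑ i : Fin n, 2^(i:ℕ) :=
        Finset.sum_le_sum_of_subset (Finset.subset_univ S)
      have h3 : ∑ i : Fin n, 2^(i:ℕ) = 2^n - 1 := by
        rw [Fin.sum_univ_eq_sum_range (fun i => 2^i) n, sum_range_two_pow]
      have : 1 ≤ 2^n := Nat.one_le_two_pow
      omega
    exact lt_of_le_of_lt Polynomial.degree_le_natDegree (by exact_mod_cast h1)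
  have hgm : (gPoly n).Monic := ((chainPoly_monic_deg (n-1)).1).pow 2
  have hgd : (gPoly n).natDegree = 2^n := by
    rw [gPoly, ((chainPoly_monic_deg (n-1)).1).natDegree_pow, (chainPoly_monic_deg (n-1)).2]
    rw [← pow_succ']
    congr 1
    omega
  set mkL := (Ideal.Quotient.mkₐ ℤ (Ideal.span {gPoly n})).toLinearMap with hmkL
  have hdisj : Disjoint (Submodule.span ℤ (Set.range q)) (LinearMap.ker mkL) := by
    rw [Submodule.disjoint_def]
    intro x hx hker
    have hxdeg : x.degree < (2^n : ℕ) := by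
      have hle : Submodule.span ℤ (Set.range q) ≤ Polynomial.degreeLT ℤ (2^n) := by
        rw [Submodule.span_le]
        rintro _ ⟨S, rfl⟩
        rw [SetLike.mem_coe, Polynomial.mem_degreeLT]
        exact hdeg S
      exact Polynomial.mem_degreeLT.mp (hle hx)
    have hdvd : gPoly n ∣ x := by
      have : x ∈ Ideal.span {gPoly n} := by
        have := LinearMap.mem_ker.mp hker
        rwa [hmkL, AlgHom.toLinearMap_apply, Ideal.Quotient.mkₐ_eq_mk,
          Ideal.Quotient.eq_zero_iff_mem] at this
      exact (Ideal.mem_span_singleton).mp this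
    by_contra hx0
    have := Polynomial.degree_le_of_dvd hdvd hx0
    rw [Polynomial.degree_eq_natDegree hgm.ne_zero, hgd] at this
    exact absurd (lt_of_le_of_lt this hxdeg) (lt_irrefl _)
  have hcomp : LinearIndependent ℤ (fun S => mkL (q S)) := hqli.map hdisj
  refine LinearIndependent.of_comp (Phi n).toLinearMap ?_
  have : ((Phi n).toLinearMap ∘ sqFreeMonomial n) = fun S => mkL (q S) := by
    funext S
    show Phi n (sqFreeMonomial n S) = _
    rw [sqFreeMonomial, Phi_mk]
    rw [show (MvPolynomial.aeval (fun j : Fin n => chainPoly (j:ℕ))) (∏ i ∈ S, X i) = q S by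
      rw [map_prod]; simp [hq]]
    rfl
  rw [this]
  exact hcomp

/-! ### Spanning -/

lemma mulX_mem_span (n : ℕ) :
    ∀ (k : ℕ) (i : Fin n), n ≤ (i:ℕ) + k → ∀ S : Finset (Fin n),
      Ideal.Quotient.mk (Ideal.span (Set.range (gens n))) (X i) * sqFreeMonomial n S ∈
        Submodule.span ℤ (Set.range (sqFreeMonomial n)) := by
  intro k
  induction k with
  | zero =>
    intro i h S
    exact absurd h (by have := i.isLt; omega)
  | succ k ih =>
    intro i h S
    classical
    by_cases hiS : i ∈ S
    · have hprod : (∏ j ∈ S, X j : MvPolynomial (Fin n) ℤ) = X i * ∏ j ∈ S.erase i, X j :=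
        (Finset.mul_prod_erase S X hiS).symm
      have key : Ideal.Quotient.mk (Ideal.span (Set.range (gens n))) (X i) * sqFreeMonomial n S
          = Ideal.Quotient.mk _ (X i ^ 2 * ∏ j ∈ S.erase i, X j) := by
        rw [sqFreeMonomial, hprod, ← map_mul]
        ring_nf
      have hg : (Ideal.Quotient.mk (Ideal.span (Set.range (gens n))) (gens n i)) = 0 :=
        Ideal.Quotient.eq_zero_iff_mem.mpr (Ideal.subset_span ⟨i, rfl⟩)
      by_cases h1 : (i:ℕ)+1 < n
      · have e1 : Ideal.Quotient.mk (Ideal.span (Set.range (gens n)))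
              (X i * ∏ j ∈ S.erase i, X j) = sqFreeMonomial n S := by
          rw [sqFreeMonomial, hprod]
        have split : (X i ^ 2 * ∏ j ∈ S.erase i, X j : MvPolynomial (Fin n) ℤ)
            = gens n i * (∏ j ∈ S.erase i, X j)
              + ((X i * ∏ j ∈ S.erase i, X j) + (X i * ∏ j ∈ S.erase i, X j))
              + X ⟨(i:ℕ)+1, h1⟩ * ∏ j ∈ S.erase i, X j := by
          rw [gens, dif_pos h1]; ring
        rw [key, split, map_add, map_add, map_add, map_mul, hg, zero_mul, zero_add, e1,
          map_mul]
        refine Submodule.add_mem _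
          (Submodule.add_mem _ (Submodule.subset_span ⟨S, rfl⟩) (Submodule.subset_span ⟨S, rfl⟩))
          ?_
        exact ih ⟨(i:ℕ)+1, h1⟩ (by simp; omega) (S.erase i)
      · have hXi : (X i ^2 : MvPolynomial (Fin n) ℤ) = gens n i := by
          rw [gens, dif_neg h1]
        rw [key, hXi, map_mul, hg, zero_mul]
        exact Submodule.zero_mem _
    · have : Ideal.Quotient.mk (Ideal.span (Set.range (gens n))) (X i) * sqFreeMonomial n S
          = sqFreeMonomial n (insert i S) := by
        rw [sqFreeMonomial, sqFreeMonomial, ← map_mul, Finset.prod_insert hiS]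
      rw [this]
      exact Submodule.subset_span ⟨_, rfl⟩

lemma mulX_mem (n : ℕ) (i : Fin n)
    (x : MvPolynomial (Fin n) ℤ ⧸ Ideal.span (Set.range (gens n)))
    (hx : x ∈ Submodule.span ℤ (Set.range (sqFreeMonomial n))) :
    Ideal.Quotient.mk (Ideal.span (Set.range (gens n))) (X i) * x ∈
      Submodule.span ℤ (Set.range (sqFreeMonomial n)) := by
  induction hx using Submodule.span_induction with
  | mem y hy =>
    obtain ⟨S, rfl⟩ := hy
    exact mulX_mem_span n n i (by omega) S
  | zero => simp
  | add y z hy hz ihy ihz => rw [mul_add]; exact Submodule.add_mem _ ihy ihz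
  | smul a y hy ihy => rw [mul_smul_comm]; exact Submodule.smul_mem _ a ihy

lemma span_sqFree_top (n : ℕ) :
    Submodule.span ℤ (Set.range (sqFreeMonomial n)) = ⊤ := by
  rw [eq_top_iff]
  rintro x -
  obtain ⟨p, rfl⟩ := Ideal.Quotient.mk_surjective x
  induction p using MvPolynomial.induction_on with
  | C a =>
    have : Ideal.Quotient.mk (Ideal.span (Set.range (gens n))) (C a)
        = a • sqFreeMonomial n ∅ := by
      rw [sqFreeMonomial, Finset.prod_empty, map_one, zsmul_eq_mul, mul_one,
        show (C a : MvPolynomial (Fin n) ℤ) = ((a:ℤ) : MvPolynomial (Fin n) ℤ) by rfl,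
        map_intCast]
    rw [this]
    exact Submodule.smul_mem _ _ (Submodule.subset_span ⟨∅, rfl⟩)
  | add p q hp hq => rw [map_add]; exact Submodule.add_mem _ hp hq
  | mul_X p i hp =>
    rw [map_mul, mul_comm]
    exact mulX_mem n i _ hp

theorem stmt2 (n : ℕ) (hn : 1 ≤ n) :
    ∃ B : Module.Basis (Finset (Fin n)) ℤ
      (MvPolynomial (Fin n) ℤ ⧸ Ideal.span (Set.range (gens n))),
      ∀ S : Finset (Fin n), B S = sqFreeMonomial n S := by
  have hli := sqFreeMonomial_li n hn
  have hsp : ⊤ ≤ Submodule.span ℤ (Set.range (sqFreeMonomial n)) := (span_sqFree_top n).ge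
  exact ⟨Module.Basis.mk hli hsp, fun S => Module.Basis.mk_apply hli hsp S⟩
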